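/- arXiv:1802.07484 — 5 statements merged into one kernel-verified Lean document; each statement's English description precedes it below -/
import Mathlib

section
/- Let $v \in C^1([0,\rho_{\max}];\mathbb{R}^+)$ with $v' \leq 0$, let $(\gamma_k)_{k=0}^{N-1}$ be non-negative, non-increasing weights, and let $(\rho_j)_{j\in\mathbb{Z}} \subset [\rho_m, \rho_M] \subseteq [0,\rho_{\max}]$. Define $V_{j+1/2} = \sum_{k=0}^{N-1}\gamma_k v(\rho_{j+k+1})$. Then for all $j$: $V_{j-1/2} - V_{j+1/2} \leq \gamma_0 (v(\rho_j) - v(\rho_M)) \leq \gamma_0 \|v'\|_\infty (\rho_M - \rho_j)$. -/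
noncomputable def supAbs (f : ℝ → ℝ) (s : Set ℝ) : ℝ :=
  sSup ((fun x => |f x|) '' s)

lemma abel_bound : ∀ N : ℕ, 1 ≤ N → ∀ (γ a : ℕ → ℝ) (b : ℝ),
    (∀ k < N, 0 ≤ γ k) → (∀ k, k + 1 < N → γ (k + 1) ≤ γ k) →
    (∀ k, b ≤ a k) →
    ∑ k ∈ Finset.range N, γ k * (a k - a (k + 1)) ≤ γ 0 * (a 0 - b) := by
  intro N
  induction N with
  | zero => intro h; omega
  | succ n ih =>
    intro _ γ a b hnn hmono hab
    rcases Nat.eq_zero_or_pos n with hn | hn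
    · subst hn
      rw [Finset.sum_range_one]
      have h0 : 0 ≤ γ 0 := hnn 0 (by omega)
      nlinarith [hab 1]
    · have key : ∑ k ∈ Finset.range (n + 1), γ k * (a k - a (k + 1)) =
          γ 0 * (a 0 - a 1) +
            ∑ k ∈ Finset.range n, γ (k + 1) * (a (k + 1) - a (k + 1 + 1)) := by
        rw [Finset.sum_range_succ' (fun k => γ k * (a k - a (k + 1))) n]
        ring
      rw [key]
      have h2 := ih hn (fun k => γ (k + 1)) (fun k => a (k + 1)) b
        (fun k hk => hnn (k + 1) (by omega))
        (fun k hk => hmono (k + 1) (by omega)) (fun k => hab (k + 1))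
      have h0 : 0 ≤ γ 0 := hnn 0 (by omega)
      have h10 : γ 1 ≤ γ 0 := hmono 0 (by omega)
      have h1b : b ≤ a 1 := hab 1
      nlinarith [h2]

theorem convolution_difference_upper_bound
    (ρmax : ℝ) (hρmax : 0 < ρmax)
    (v v' : ℝ → ℝ)
    (hv_deriv : ∀ x ∈ Set.Icc (0:ℝ) ρmax, HasDerivAt v (v' x) x)
    (hv'_cont : ContinuousOn v' (Set.Icc 0 ρmax))
    (hv_nonneg : ∀ x ∈ Set.Icc (0:ℝ) ρmax, 0 ≤ v x)
    (hv'_nonpos : ∀ x ∈ Set.Icc (0:ℝ) ρmax, v' x ≤ 0)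
    (N : ℕ) (hN : 1 ≤ N) (γ : ℕ → ℝ)
    (hγ_nonneg : ∀ k < N, 0 ≤ γ k)
    (hγ_mono : ∀ k, k + 1 < N → γ (k + 1) ≤ γ k)
    (ρm ρM : ℝ) (hρm : 0 ≤ ρm) (hρM : ρM ≤ ρmax)
    (ρ : ℤ → ℝ) (hρ : ∀ j, ρ j ∈ Set.Icc ρm ρM)
    (V : ℤ → ℝ)
    (hV : ∀ j, V j = ∑ k ∈ Finset.range N, γ k * v (ρ (j + k + 1))) :
    ∀ j : ℤ, V (j - 1) - V j ≤ γ 0 * (v (ρ j) - v ρM) ∧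
      γ 0 * (v (ρ j) - v ρM) ≤
        γ 0 * supAbs v' (Set.Icc 0 ρmax) * (ρM - ρ j) := by
  -- basic facts
  have hρmem : ∀ i : ℤ, ρ i ∈ Set.Icc (0:ℝ) ρmax := fun i => by
    obtain ⟨h1, h2⟩ := hρ i
    exact ⟨le_trans hρm h1, le_trans h2 hρM⟩
  have hρMmem : ρM ∈ Set.Icc (0:ℝ) ρmax := by
    obtain ⟨h1, h2⟩ := hρ 0
    exact ⟨le_trans (le_trans hρm h1) h2, hρM⟩
  -- v is antitone on [0, ρmax]
  have hanti : AntitoneOn v (Set.Icc (0:ℝ) ρmax) := by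
    apply antitoneOn_of_deriv_nonpos (convex_Icc 0 ρmax)
    · exact fun x hx => (hv_deriv x hx).continuousAt.continuousWithinAt
    · intro x hx
      exact (hv_deriv x (interior_subset hx)).differentiableAt.differentiableWithinAt
    · intro x hx
      rw [(hv_deriv x (interior_subset hx)).deriv]
      exact hv'_nonpos x (interior_subset hx)
  have hvM : ∀ i : ℤ, v ρM ≤ v (ρ i) := fun i =>
    hanti (hρmem i) hρMmem (hρ i).2
  intro j
  constructor
  · -- first inequality
    have hVj1 : V (j - 1) = ∑ k ∈ Finset.range N, γ k * v (ρ (j + k)) := by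
      rw [hV (j - 1)]
      apply Finset.sum_congr rfl
      intro k _
      congr 2
      ring
    rw [hVj1, hV j]
    have : ∑ k ∈ Finset.range N, γ k * v (ρ (j + k)) -
        ∑ k ∈ Finset.range N, γ k * v (ρ (j + k + 1)) =
        ∑ k ∈ Finset.range N, γ k * (v (ρ (j + k)) - v (ρ (j + (k + 1)))) := by
      rw [← Finset.sum_sub_distrib]
      apply Finset.sum_congr rfl
      intro k _
      ring_nf
    rw [this]
    have := abel_bound N hN γ (fun k => v (ρ (j + k))) (v ρM) hγ_nonneg hγ_mono
      (fun k => hvM (j + k))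
    simpa using this
  · -- second inequality
    have hγ0 : 0 ≤ γ 0 := hγ_nonneg 0 hN
    set C := supAbs v' (Set.Icc 0 ρmax) with hC
    have hbdd : BddAbove ((fun x => |v' x|) '' Set.Icc (0:ℝ) ρmax) :=
      (isCompact_Icc.image_of_continuousOn hv'_cont.abs).bddAbove
    have hbound : ∀ x ∈ Set.Icc (0:ℝ) ρmax, ‖v' x‖ ≤ C := by
      intro x hx
      exact le_csSup hbdd ⟨x, hx, rfl⟩
    have hlip := (convex_Icc (0:ℝ) ρmax).norm_image_sub_le_of_norm_hasDerivWithin_le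
      (fun x hx => (hv_deriv x hx).hasDerivWithinAt) hbound hρMmem (hρmem j)
    have h1 : v (ρ j) - v ρM ≤ C * (ρM - ρ j) := by
      have h2 : ‖ρ j - ρM‖ = ρM - ρ j := by
        rw [Real.norm_eq_abs, abs_sub_comm, abs_of_nonneg (by linarith [(hρ j).2])]
      calc v (ρ j) - v ρM ≤ ‖v (ρ j) - v ρM‖ := le_abs_self _
        _ ≤ C * ‖ρ j - ρM‖ := hlip
        _ = C * (ρM - ρ j) := by rw [h2]
    calc γ 0 * (v (ρ j) - v ρM) ≤ γ 0 * (C * (ρM - ρ j)) :=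
          mul_le_mul_of_nonneg_left h1 hγ0
      _ = γ 0 * C * (ρM - ρ j) := by ring
end

section
/- Under the same hypotheses, with $\rho_m = \inf_j \rho_j$, one has the lower bound $V_{j-1/2} - V_{j+1/2} \geq \gamma_0 (v(\rho_j) - v(\rho_m)) \geq -\gamma_0 \|v'\|_\infty (\rho_j - \rho_m)$ for all $j$. -/
lemma v_antitone_aux (ρmax : ℝ) (v v' : ℝ → ℝ)
    (hv_deriv : ∀ x ∈ Set.Icc (0:ℝ) ρmax, HasDerivAt v (v' x) x)
    (hv'_nonpos : ∀ x ∈ Set.Icc (0:ℝ) ρmax, v' x ≤ 0)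
    {a b : ℝ} (ha : a ∈ Set.Icc (0:ℝ) ρmax) (hb : b ∈ Set.Icc (0:ℝ) ρmax)
    (hab : a ≤ b) : v b ≤ v a := by
  rcases eq_or_lt_of_le hab with h | h
  · subst h; exact le_rfl
  · have hsub : Set.Icc a b ⊆ Set.Icc (0:ℝ) ρmax :=
      Set.Icc_subset_Icc ha.1 hb.2
    have hcont : ContinuousOn v (Set.Icc a b) := fun x hx =>
      (hv_deriv x (hsub hx)).continuousAt.continuousWithinAt
    have hder : ∀ x ∈ Set.Ioo a b, HasDerivAt v (v' x) x := fun x hx =>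
      hv_deriv x (hsub (Set.Ioo_subset_Icc_self hx))
    obtain ⟨c, hc, hcs⟩ := exists_hasDerivAt_eq_slope v v' h hcont hder
    have hc' : v' c ≤ 0 := hv'_nonpos c (hsub (Set.Ioo_subset_Icc_self hc))
    rw [hcs] at hc'
    have : v b - v a ≤ 0 := by
      have hba : 0 < b - a := by linarith
      have hq := div_mul_cancel₀ (v b - v a) (ne_of_gt hba)
      nlinarith [mul_le_mul_of_nonneg_right hc' (le_of_lt hba)]
    linarith

theorem convolution_difference_lower_bound
    (ρmax : ℝ) (hρmax : 0 < ρmax)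
    (v v' : ℝ → ℝ)
    (hv_deriv : ∀ x ∈ Set.Icc (0:ℝ) ρmax, HasDerivAt v (v' x) x)
    (hv'_cont : ContinuousOn v' (Set.Icc 0 ρmax))
    (hv_nonneg : ∀ x ∈ Set.Icc (0:ℝ) ρmax, 0 ≤ v x)
    (hv'_nonpos : ∀ x ∈ Set.Icc (0:ℝ) ρmax, v' x ≤ 0)
    (N : ℕ) (hN : 1 ≤ N) (γ : ℕ → ℝ)
    (hγ_nonneg : ∀ k < N, 0 ≤ γ k)
    (hγ_mono : ∀ k, k + 1 < N → γ (k + 1) ≤ γ k)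
    (hγ_sum : ∑ k ∈ Finset.range N, γ k = 1)
    (ρm ρM : ℝ) (hρm : 0 ≤ ρm) (hρM : ρM ≤ ρmax)
    (ρ : ℤ → ℝ) (hρ : ∀ j, ρ j ∈ Set.Icc ρm ρM)
    (V : ℤ → ℝ)
    (hV : ∀ j, V j = ∑ k ∈ Finset.range N, γ k * v (ρ (j + k + 1))) :
    ∀ j : ℤ, V (j - 1) - V j ≥ γ 0 * (v (ρ j) - v ρm) ∧
      γ 0 * (v (ρ j) - v ρm) ≥
        -(γ 0 * supAbs v' (Set.Icc 0 ρmax) * (ρ j - ρm)) := by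
  have hρm_mem : ρm ∈ Set.Icc (0:ℝ) ρmax :=
    ⟨hρm, le_trans (le_trans (hρ 0).1 (hρ 0).2) hρM⟩
  have hρj_mem : ∀ i : ℤ, ρ i ∈ Set.Icc (0:ℝ) ρmax := fun i =>
    ⟨le_trans hρm (hρ i).1, le_trans (hρ i).2 hρM⟩
  have hγ0 : 0 ≤ γ 0 := hγ_nonneg 0 (by omega)
  have hvle : ∀ i : ℤ, v (ρ i) ≤ v ρm := fun i =>
    v_antitone_aux ρmax v v' hv_deriv hv'_nonpos hρm_mem (hρj_mem i) (hρ i).1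
  intro j
  constructor
  · -- first inequality
    obtain ⟨n, hn⟩ : ∃ n, N = n + 1 := ⟨N - 1, by omega⟩
    subst hn
    have h1 : V (j-1) = ∑ k ∈ Finset.range (n+1), γ k * (v (ρ (j + k)) - v ρm) + v ρm := by
      rw [hV]
      have : ∀ k ∈ Finset.range (n+1), γ k * v (ρ (j - 1 + k + 1)) = γ k * v (ρ (j + k)) := by
        intro k _; congr 2; ring
      rw [Finset.sum_congr rfl this]
      simp [mul_sub, Finset.sum_sub_distrib, ← Finset.sum_mul, hγ_sum]
    have h2 : V j = ∑ k ∈ Finset.range (n+1), γ k * (v (ρ (j + k + 1)) - v ρm) + v ρm := by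
      rw [hV]
      simp [mul_sub, Finset.sum_sub_distrib, ← Finset.sum_mul, hγ_sum]
    rw [h1, h2]
    rw [Finset.sum_range_succ' (fun k => γ k * (v (ρ (j + k)) - v ρm)) n,
        Finset.sum_range_succ (fun k => γ k * (v (ρ (j + k + 1)) - v ρm)) n]
    have hkey : ∀ k ∈ Finset.range n,
        γ k * (v (ρ (j + k + 1)) - v ρm) ≤ γ (k+1) * (v (ρ (j + (k+1:ℕ))) - v ρm) := by
      intro k hk
      rw [Finset.mem_range] at hk
      have hcast : (j + ((k:ℤ)+1)) = j + (k:ℤ) + 1 := by ring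
      push_cast [hcast]
      have ht : v (ρ (j + k + 1)) - v ρm ≤ 0 := by linarith [hvle (j + k + 1)]
      have hγ : γ (k+1) ≤ γ k := hγ_mono k (by omega)
      nlinarith
    have hsum : ∑ k ∈ Finset.range n, γ k * (v (ρ (j + k + 1)) - v ρm)
        ≤ ∑ k ∈ Finset.range n, γ (k+1) * (v (ρ (j + (k+1:ℕ))) - v ρm) :=
      Finset.sum_le_sum hkey
    have hlast : γ n * (v (ρ (j + n + 1)) - v ρm) ≤ 0 := by
      have := hvle (j + n + 1)
      have hγn : 0 ≤ γ n := hγ_nonneg n (by omega)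
      nlinarith
    have h0 : γ 0 * (v (ρ (j + (0:ℕ))) - v ρm) = γ 0 * (v (ρ j) - v ρm) := by
      norm_num
    linarith [h0, hsum, hlast]
  · -- second inequality
    set M := supAbs v' (Set.Icc (0:ℝ) ρmax) with hM
    have hbdd : BddAbove ((fun x => |v' x|) '' Set.Icc (0:ℝ) ρmax) :=
      (isCompact_Icc.image_of_continuousOn hv'_cont.abs).bddAbove
    have hMle : ∀ x ∈ Set.Icc (0:ℝ) ρmax, |v' x| ≤ M := fun x hx =>
      le_csSup hbdd ⟨x, hx, rfl⟩
    have hρjm : ρm ≤ ρ j := (hρ j).1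
    rcases eq_or_lt_of_le hρjm with h | h
    · rw [← h]; simp
    · have hsub : Set.Icc ρm (ρ j) ⊆ Set.Icc (0:ℝ) ρmax :=
        Set.Icc_subset_Icc hρm_mem.1 (hρj_mem j).2
      have hcont : ContinuousOn v (Set.Icc ρm (ρ j)) := fun x hx =>
        (hv_deriv x (hsub hx)).continuousAt.continuousWithinAt
      have hder : ∀ x ∈ Set.Ioo ρm (ρ j), HasDerivAt v (v' x) x := fun x hx =>
        hv_deriv x (hsub (Set.Ioo_subset_Icc_self hx))
      obtain ⟨c, hc, hcs⟩ := exists_hasDerivAt_eq_slope v v' h hcont hder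
      have hcmem := hsub (Set.Ioo_subset_Icc_self hc)
      have h1 : -M ≤ v' c := by
        have := hMle c hcmem
        have := abs_le.mp this
        linarith
      have heq : v (ρ j) - v ρm = v' c * (ρ j - ρm) := by
        have hne : ρ j - ρm ≠ 0 := by linarith
        rw [hcs, div_mul_cancel₀ _ hne]
      have h2 : v (ρ j) - v ρm ≥ -M * (ρ j - ρm) := by
        rw [heq]
        have : 0 ≤ ρ j - ρm := by linarith
        nlinarith
      nlinarith
end

section
/- One-step monotonicity bound: with the hypotheses and notation of the scheme above (CFL condition satisfied, $g' \geq 0$, $v' \leq 0$, $\gamma_k$ non-increasing non-negative summing to 1, $\rho_j^n \in [\rho_m,\rho_M]$ for all $j$), for each $j$ one has $V_{j-1/2}^n g(\rho_M) - V_{j+1/2}^n g(\rho_j^n) \leq (\gamma_0\|v'\|\|g\| + \|v\|\|g'\|)(\rho_M - \rho_j^n)$. -/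
lemma abs_le_supAbs {f : ℝ → ℝ} {a b : ℝ} (hf : ContinuousOn f (Set.Icc a b))
    {x : ℝ} (hx : x ∈ Set.Icc a b) : |f x| ≤ supAbs f (Set.Icc a b) :=
  le_csSup (IsCompact.bddAbove_image isCompact_Icc hf.abs) ⟨x, hx, rfl⟩

lemma abel_aux (γ w : ℕ → ℝ) :
    ∀ N, 1 ≤ N → (∀ k, k + 1 < N → γ (k + 1) ≤ γ k) → (∀ k, 0 ≤ w k) →
    ∑ k ∈ Finset.range N, γ k * (w k - w (k + 1)) ≤ γ 0 * w 0 - γ (N - 1) * w N := by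
  intro N
  induction N with
  | zero => intro h; omega
  | succ n ih =>
    intro _ hmono hw
    rcases Nat.eq_zero_or_pos n with hn0 | hn1
    · subst hn0
      simp [Finset.sum_range_one]
      ring_nf
      nlinarith [hw 1, hw 0]
    · have hsum := ih hn1 (fun k hk => hmono k (by omega)) hw
      rw [Finset.sum_range_succ]
      have hγn : γ n ≤ γ (n - 1) := by
        have := hmono (n - 1) (by omega)
        have h1 : n - 1 + 1 = n := by omega
        rwa [h1] at this
      have hwn := hw n
      have : n + 1 - 1 = n := by omega
      rw [this]
      nlinarith [mul_nonneg (sub_nonneg.2 hγn) hwn]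

theorem one_step_monotonicity_bound
    (ρmax : ℝ) (hρmax : 0 < ρmax)
    (g g' v v' : ℝ → ℝ)
    (hg_deriv : ∀ x ∈ Set.Icc (0:ℝ) ρmax, HasDerivAt g (g' x) x)
    (hg'_cont : ContinuousOn g' (Set.Icc 0 ρmax))
    (hg_nonneg : ∀ x ∈ Set.Icc (0:ℝ) ρmax, 0 ≤ g x)
    (hg'_nonneg : ∀ x ∈ Set.Icc (0:ℝ) ρmax, 0 ≤ g' x)
    (hv_deriv : ∀ x ∈ Set.Icc (0:ℝ) ρmax, HasDerivAt v (v' x) x)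
    (hv'_cont : ContinuousOn v' (Set.Icc 0 ρmax))
    (hv_nonneg : ∀ x ∈ Set.Icc (0:ℝ) ρmax, 0 ≤ v x)
    (hv'_nonpos : ∀ x ∈ Set.Icc (0:ℝ) ρmax, v' x ≤ 0)
    (N : ℕ) (hN : 1 ≤ N) (γ : ℕ → ℝ)
    (hγ_nonneg : ∀ k < N, 0 ≤ γ k)
    (hγ_mono : ∀ k, k + 1 < N → γ (k + 1) ≤ γ k)
    (hγ_sum : ∑ k ∈ Finset.range N, γ k = 1)
    (lam : ℝ) (hlam : 0 < lam)
    (hCFL : lam * (γ 0 * supAbs v' (Set.Icc 0 ρmax) * supAbs g (Set.Icc 0 ρmax)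
        + supAbs v (Set.Icc 0 ρmax) * supAbs g' (Set.Icc 0 ρmax)) ≤ 1)
    (ρm ρM : ℝ) (hρm : 0 ≤ ρm) (hρM : ρM ≤ ρmax)
    (ρ : ℤ → ℝ) (hρ : ∀ j, ρ j ∈ Set.Icc ρm ρM)
    (Vminus Vplus : ℤ → ℝ)
    (hVm : ∀ j, Vminus j = ∑ k ∈ Finset.range N, γ k * v (ρ (j + k)))
    (hVp : ∀ j, Vplus j = ∑ k ∈ Finset.range N, γ k * v (ρ (j + k + 1))) :
    ∀ j : ℤ, Vminus j * g ρM - Vplus j * g (ρ j) ≤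
      (γ 0 * supAbs v' (Set.Icc 0 ρmax) * supAbs g (Set.Icc 0 ρmax)
        + supAbs v (Set.Icc 0 ρmax) * supAbs g' (Set.Icc 0 ρmax)) * (ρM - ρ j) := by
  intro j
  have hρk : ∀ i : ℤ, ρ i ∈ Set.Icc (0:ℝ) ρmax :=
    fun i => ⟨hρm.trans (hρ i).1, (hρ i).2.trans hρM⟩
  have hρjM : ρ j ≤ ρM := (hρ j).2
  have hρjs : ρ j ∈ Set.Icc (0:ℝ) ρmax := hρk j
  have hρMs : ρM ∈ Set.Icc (0:ℝ) ρmax := ⟨hρjs.1.trans hρjM, hρM⟩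
  have hvcont : ContinuousOn v (Set.Icc (0:ℝ) ρmax) :=
    fun x hx => (hv_deriv x hx).continuousAt.continuousWithinAt
  have hgcont : ContinuousOn g (Set.Icc (0:ℝ) ρmax) :=
    fun x hx => (hg_deriv x hx).continuousAt.continuousWithinAt
  set Cv := supAbs v (Set.Icc (0:ℝ) ρmax) with hCv
  set Cg := supAbs g (Set.Icc (0:ℝ) ρmax) with hCg
  set Cv' := supAbs v' (Set.Icc (0:ℝ) ρmax) with hCv'
  set Cg' := supAbs g' (Set.Icc (0:ℝ) ρmax) with hCg'
  have hCv0 : 0 ≤ Cv := (abs_nonneg _).trans (abs_le_supAbs hvcont hρjs)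
  have hCg0 : 0 ≤ Cg := (abs_nonneg _).trans (abs_le_supAbs hgcont hρjs)
  have hCv'0 : 0 ≤ Cv' := (abs_nonneg _).trans (abs_le_supAbs hv'_cont hρjs)
  have hCg'0 : 0 ≤ Cg' := (abs_nonneg _).trans (abs_le_supAbs hg'_cont hρjs)
  -- MVT bounds
  have hg_mvt : |g ρM - g (ρ j)| ≤ Cg' * (ρM - ρ j) := by
    have := Convex.norm_image_sub_le_of_norm_hasDerivWithin_le
      (f := g) (f' := g') (C := Cg')
      (fun x hx => (hg_deriv x hx).hasDerivWithinAt)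
      (fun x hx => by simpa [Real.norm_eq_abs] using abs_le_supAbs hg'_cont hx)
      (convex_Icc 0 ρmax) hρjs hρMs
    simpa [Real.norm_eq_abs, abs_of_nonneg (sub_nonneg.2 hρjM)] using this
  have hv_mvt : v (ρ j) - v ρM ≤ Cv' * (ρM - ρ j) := by
    have := Convex.norm_image_sub_le_of_norm_hasDerivWithin_le
      (f := v) (f' := v') (C := Cv')
      (fun x hx => (hv_deriv x hx).hasDerivWithinAt)
      (fun x hx => by simpa [Real.norm_eq_abs] using abs_le_supAbs hv'_cont hx)
      (convex_Icc 0 ρmax) hρjs hρMs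
    rw [Real.norm_eq_abs, Real.norm_eq_abs, abs_of_nonneg (sub_nonneg.2 hρjM),
      abs_sub_comm] at this
    exact (le_abs_self _).trans this
  -- v antitone
  have hanti : AntitoneOn v (Set.Icc (0:ℝ) ρmax) := by
    apply antitoneOn_of_deriv_nonpos (convex_Icc 0 ρmax) hvcont
    · intro x hx
      have hx' : x ∈ Set.Icc (0:ℝ) ρmax := interior_subset hx
      exact ((hv_deriv x hx').differentiableAt).differentiableWithinAt
    · intro x hx
      have hx' : x ∈ Set.Icc (0:ℝ) ρmax := interior_subset hx
      rw [(hv_deriv x hx').deriv]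
      exact hv'_nonpos x hx'
  -- Abel estimate
  set w : ℕ → ℝ := fun k => v (ρ (j + k)) - v ρM with hw_def
  have hw : ∀ k, 0 ≤ w k := fun k =>
    sub_nonneg.2 (hanti (hρk _) hρMs ((hρ _).2))
  have hdiff : Vminus j - Vplus j = ∑ k ∈ Finset.range N, γ k * (w k - w (k + 1)) := by
    rw [hVm, hVp, ← Finset.sum_sub_distrib]
    apply Finset.sum_congr rfl
    intro k _
    have hcast : (j + (k:ℤ) + 1) = j + ((k + 1 : ℕ) : ℤ) := by push_cast; ring
    simp only [hw_def, hcast]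
    ring
  have habel : Vminus j - Vplus j ≤ γ 0 * (v (ρ j) - v ρM) := by
    have h1 := abel_aux γ w N hN hγ_mono hw
    have h2 : 0 ≤ γ (N - 1) * w N := mul_nonneg (hγ_nonneg _ (by omega)) (hw N)
    have hw0 : w 0 = v (ρ j) - v ρM := by simp [hw_def]
    rw [hdiff]
    rw [hw0] at h1
    linarith
  -- bound on |Vminus j|
  have hVmabs : |Vminus j| ≤ Cv := by
    rw [hVm]
    calc |∑ k ∈ Finset.range N, γ k * v (ρ (j + k))|
        ≤ ∑ k ∈ Finset.range N, |γ k * v (ρ (j + k))| :=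
          Finset.abs_sum_le_sum_abs _ _
      _ ≤ ∑ k ∈ Finset.range N, γ k * Cv := by
          apply Finset.sum_le_sum
          intro k hk
          rw [abs_mul, abs_of_nonneg (hγ_nonneg k (Finset.mem_range.mp hk))]
          exact mul_le_mul_of_nonneg_left (abs_le_supAbs hvcont (hρk _))
            (hγ_nonneg k (Finset.mem_range.mp hk))
      _ = Cv := by rw [← Finset.sum_mul, hγ_sum, one_mul]
  -- bounds on g (ρ j)
  have hgj0 : 0 ≤ g (ρ j) := hg_nonneg _ hρjs
  have hgjCg : g (ρ j) ≤ Cg := (le_abs_self _).trans (abs_le_supAbs hgcont hρjs)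
  have hγ00 : 0 ≤ γ 0 := hγ_nonneg 0 (by omega)
  have hvjvM0 : 0 ≤ v (ρ j) - v ρM := by
    have := hw 0
    simpa [hw_def] using this
  -- assemble
  have hT1 : Vminus j * (g ρM - g (ρ j)) ≤ Cv * (Cg' * (ρM - ρ j)) := by
    calc Vminus j * (g ρM - g (ρ j)) ≤ |Vminus j * (g ρM - g (ρ j))| := le_abs_self _
      _ = |Vminus j| * |g ρM - g (ρ j)| := abs_mul _ _
      _ ≤ Cv * (Cg' * (ρM - ρ j)) :=
          mul_le_mul hVmabs hg_mvt (abs_nonneg _) hCv0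
  have hT2 : (Vminus j - Vplus j) * g (ρ j) ≤ γ 0 * (Cv' * (ρM - ρ j)) * Cg := by
    calc (Vminus j - Vplus j) * g (ρ j)
        ≤ (γ 0 * (v (ρ j) - v ρM)) * g (ρ j) :=
          mul_le_mul_of_nonneg_right habel hgj0
      _ ≤ γ 0 * (Cv' * (ρM - ρ j)) * Cg := by
          have h3 : (v (ρ j) - v ρM) * g (ρ j) ≤ (Cv' * (ρM - ρ j)) * Cg :=
            mul_le_mul hv_mvt hgjCg hgj0
              (mul_nonneg hCv'0 (sub_nonneg.2 hρjM))
          calc γ 0 * (v (ρ j) - v ρM) * g (ρ j)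
              = γ 0 * ((v (ρ j) - v ρM) * g (ρ j)) := by ring
            _ ≤ γ 0 * ((Cv' * (ρM - ρ j)) * Cg) := mul_le_mul_of_nonneg_left h3 hγ00
            _ = γ 0 * (Cv' * (ρM - ρ j)) * Cg := by ring
  calc Vminus j * g ρM - Vplus j * g (ρ j)
      = Vminus j * (g ρM - g (ρ j)) + (Vminus j - Vplus j) * g (ρ j) := by ring
    _ ≤ Cv * (Cg' * (ρM - ρ j)) + γ 0 * (Cv' * (ρM - ρ j)) * Cg := add_le_add hT1 hT2
    _ = (γ 0 * Cv' * Cg + Cv * Cg') * (ρM - ρ j) := by ring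
end

section
/- Discrete entropy inequality: under hypotheses (H2) (i.e., $g' \geq 0$, $v' \leq 0$, monotone kernel weights) and the CFL condition $\lambda(\gamma_0\|v'\|\|g\| + \|v\|\|g'\|) \leq 1$, the scheme values $\rho_j^{n+1} = \rho_j^n - \lambda(V_{j+1/2}^n g(\rho_j^n) - V_{j-1/2}^n g(\rho_{j-1}^n))$ satisfy, for every $\kappa \in [0,\rho_{\max}]$: $|\rho_j^{n+1}-\kappa| - |\rho_j^n - \kappa| + \lambda(F^\kappa_{j+1/2}(\rho_j^n) - F^\kappa_{j-1/2}(\rho_{j-1}^n)) + \lambda\,\operatorname{sgn}(\rho_j^{n+1}-\kappa)\, g(\kappa)(V_{j+1/2}^n - V_{j-1/2}^n) \leq 0$. -/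
theorem discrete_entropy_inequality
    (ρmax : ℝ) (hρmax : 0 < ρmax)
    (g g' v v' : ℝ → ℝ)
    (hg_deriv : ∀ x ∈ Set.Icc (0:ℝ) ρmax, HasDerivAt g (g' x) x)
    (hg'_cont : ContinuousOn g' (Set.Icc 0 ρmax))
    (hg_nonneg : ∀ x ∈ Set.Icc (0:ℝ) ρmax, 0 ≤ g x)
    (hg'_nonneg : ∀ x ∈ Set.Icc (0:ℝ) ρmax, 0 ≤ g' x)
    (hv_deriv : ∀ x ∈ Set.Icc (0:ℝ) ρmax, HasDerivAt v (v' x) x)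
    (hv'_cont : ContinuousOn v' (Set.Icc 0 ρmax))
    (hv_nonneg : ∀ x ∈ Set.Icc (0:ℝ) ρmax, 0 ≤ v x)
    (hv'_nonpos : ∀ x ∈ Set.Icc (0:ℝ) ρmax, v' x ≤ 0)
    (N : ℕ) (hN : 1 ≤ N) (γ : ℕ → ℝ)
    (hγ_nonneg : ∀ k < N, 0 ≤ γ k)
    (hγ_mono : ∀ k, k + 1 < N → γ (k + 1) ≤ γ k)
    (hγ_sum : ∑ k ∈ Finset.range N, γ k = 1)
    (lam : ℝ) (hlam : 0 < lam)
    (hCFL : lam * (γ 0 * supAbs v' (Set.Icc 0 ρmax) * supAbs g (Set.Icc 0 ρmax)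
        + supAbs v (Set.Icc 0 ρmax) * supAbs g' (Set.Icc 0 ρmax)) ≤ 1)
    (ρ ρnext : ℤ → ℝ)
    (hρ : ∀ j, ρ j ∈ Set.Icc (0:ℝ) ρmax)
    (V : ℤ → ℝ)
    (hV : ∀ j, V j = ∑ k ∈ Finset.range N, γ k * v (ρ (j + k + 1)))
    (hscheme : ∀ j, ρnext j =
      ρ j - lam * (V j * g (ρ j) - V (j - 1) * g (ρ (j - 1))))
    (κ : ℝ) (hκ : κ ∈ Set.Icc (0:ℝ) ρmax) :
    ∀ j : ℤ,
      |ρnext j - κ| - |ρ j - κ|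
        + lam * ((V j * g (max (ρ j) κ) - V j * g (min (ρ j) κ))
            - (V (j - 1) * g (max (ρ (j - 1)) κ) - V (j - 1) * g (min (ρ (j - 1)) κ)))
        + lam * Real.sign (ρnext j - κ) * g κ * (V j - V (j - 1)) ≤ 0 := by

  have h0ρ : (0:ℝ) ∈ Set.Icc (0:ℝ) ρmax := ⟨le_refl _, hρmax.le⟩
  have supb : ∀ (f : ℝ → ℝ), ContinuousOn f (Set.Icc 0 ρmax) →
      ∀ x ∈ Set.Icc (0:ℝ) ρmax, |f x| ≤ supAbs f (Set.Icc 0 ρmax) := by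
    intro f hf x hx
    have hb : BddAbove ((fun x => |f x|) '' Set.Icc 0 ρmax) :=
      (isCompact_Icc.image_of_continuousOn hf.abs).bddAbove
    exact le_csSup hb ⟨x, hx, rfl⟩
  have hg_cont : ContinuousOn g (Set.Icc 0 ρmax) := fun x hx =>
    (hg_deriv x hx).continuousAt.continuousWithinAt
  have hv_cont : ContinuousOn v (Set.Icc 0 ρmax) := fun x hx =>
    (hv_deriv x hx).continuousAt.continuousWithinAt
  have sup_nn : ∀ (f : ℝ → ℝ), ContinuousOn f (Set.Icc 0 ρmax) →
      0 ≤ supAbs f (Set.Icc 0 ρmax) := fun f hf =>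
    le_trans (abs_nonneg _) (supb f hf 0 h0ρ)
  -- monotonicity + Lipschitz bound for g via MVT
  have key : ∀ p ∈ Set.Icc (0:ℝ) ρmax, ∀ q ∈ Set.Icc (0:ℝ) ρmax, p ≤ q →
      0 ≤ g q - g p ∧ g q - g p ≤ supAbs g' (Set.Icc 0 ρmax) * (q - p) := by
    intro p hp q hq hpq
    rcases eq_or_lt_of_le hpq with h | h
    · subst h; simp
    · have hsub : Set.Icc p q ⊆ Set.Icc (0:ℝ) ρmax := Set.Icc_subset_Icc hp.1 hq.2
      obtain ⟨c, hc, hceq⟩ := exists_hasDerivAt_eq_slope g g' h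
        (fun t ht => (hg_deriv t (hsub ht)).continuousAt.continuousWithinAt)
        (fun t ht => hg_deriv t (hsub (Set.Ioo_subset_Icc_self ht)))
      have hcm : c ∈ Set.Icc (0:ℝ) ρmax := hsub (Set.Ioo_subset_Icc_self hc)
      have hne : q - p ≠ 0 := sub_ne_zero.mpr h.ne'
      have heq : g q - g p = g' c * (q - p) := by
        rw [hceq]; field_simp
      constructor
      · rw [heq]; exact mul_nonneg (hg'_nonneg c hcm) (by linarith)
      · rw [heq]
        exact mul_le_mul_of_nonneg_right
          ((le_abs_self _).trans (supb g' hg'_cont c hcm)) (by linarith)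
  have hg_mono : ∀ p ∈ Set.Icc (0:ℝ) ρmax, ∀ q ∈ Set.Icc (0:ℝ) ρmax, p ≤ q →
      g p ≤ g q := fun p hp q hq hpq => by linarith [(key p hp q hq hpq).1]
  have hVbound : ∀ i : ℤ, 0 ≤ V i ∧ V i ≤ supAbs v (Set.Icc 0 ρmax) := by
    intro i
    rw [hV i]
    constructor
    · apply Finset.sum_nonneg
      intro k hk
      exact mul_nonneg (hγ_nonneg k (Finset.mem_range.mp hk)) (hv_nonneg _ (hρ _))
    · calc ∑ k ∈ Finset.range N, γ k * v (ρ (i + k + 1))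
          ≤ ∑ k ∈ Finset.range N, γ k * supAbs v (Set.Icc 0 ρmax) := by
            apply Finset.sum_le_sum; intro k hk
            exact mul_le_mul_of_nonneg_left
              ((le_abs_self _).trans (supb v hv_cont _ (hρ _)))
              (hγ_nonneg k (Finset.mem_range.mp hk))
        _ = supAbs v (Set.Icc 0 ρmax) := by rw [← Finset.sum_mul, hγ_sum, one_mul]
  have hCFL' : lam * supAbs v (Set.Icc 0 ρmax) * supAbs g' (Set.Icc 0 ρmax) ≤ 1 := by
    have h1 : 0 ≤ lam * (γ 0 * supAbs v' (Set.Icc 0 ρmax) * supAbs g (Set.Icc 0 ρmax)) :=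
      mul_nonneg hlam.le (mul_nonneg (mul_nonneg (hγ_nonneg 0 hN)
        (sup_nn v' hv'_cont)) (sup_nn g hg_cont))
    nlinarith [hCFL]
  have keyB : ∀ W : ℝ, 0 ≤ W → W ≤ supAbs v (Set.Icc 0 ρmax) →
      ∀ p ∈ Set.Icc (0:ℝ) ρmax, ∀ q ∈ Set.Icc (0:ℝ) ρmax, p ≤ q →
      lam * (W * (g q - g p)) ≤ q - p := by
    intro W hW0 hW p hp q hq hpq
    obtain ⟨h0, hlip⟩ := key p hp q hq hpq
    calc lam * (W * (g q - g p))
        ≤ lam * (supAbs v (Set.Icc 0 ρmax) * (supAbs g' (Set.Icc 0 ρmax) * (q - p))) := by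
          apply mul_le_mul_of_nonneg_left _ hlam.le
          exact mul_le_mul hW hlip h0 (sup_nn v hv_cont)
      _ = (lam * supAbs v (Set.Icc 0 ρmax) * supAbs g' (Set.Icc 0 ρmax)) * (q - p) := by ring
      _ ≤ 1 * (q - p) := mul_le_mul_of_nonneg_right hCFL' (by linarith)
      _ = q - p := one_mul _
  intro j
  have ha := hρ (j - 1)
  have hb := hρ j
  set a := ρ (j - 1) with ha_def
  set b := ρ j with hb_def
  set x := ρnext j with hx_def
  set Vj := V j with hVj_def
  set Vm := V (j - 1) with hVm_def
  have hVj0 : 0 ≤ Vj := (hVbound j).1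
  have hVjb : Vj ≤ supAbs v (Set.Icc 0 ρmax) := (hVbound j).2
  have hVm0 : 0 ≤ Vm := (hVbound (j - 1)).1
  have hx : x = b - lam * (Vj * g b - Vm * g a) := hscheme j
  have hmina : min a κ ∈ Set.Icc (0:ℝ) ρmax :=
    ⟨le_min ha.1 hκ.1, (min_le_left a κ).trans ha.2⟩
  have hmaxa : max a κ ∈ Set.Icc (0:ℝ) ρmax :=
    ⟨ha.1.trans (le_max_left a κ), max_le ha.2 hκ.2⟩
  have hminb : min b κ ∈ Set.Icc (0:ℝ) ρmax :=
    ⟨le_min hb.1 hκ.1, (min_le_left b κ).trans hb.2⟩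
  have hmaxb : max b κ ∈ Set.Icc (0:ℝ) ρmax :=
    ⟨hb.1.trans (le_max_left b κ), max_le hb.2 hκ.2⟩
  have habsb : max b κ - min b κ = |b - κ| := by rw [max_sub_min_eq_abs, abs_sub_comm]
  -- a-part auxiliary
  have haux : g a - g κ ≤ g (max a κ) - g (min a κ) ∧
      g κ - g a ≤ g (max a κ) - g (min a κ) := by
    rcases le_total a κ with h | h
    · rw [max_eq_right h, min_eq_left h]
      have := hg_mono a ha κ hκ h
      constructor <;> linarith
    · rw [max_eq_left h, min_eq_right h]
      have := hg_mono κ hκ a ha h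
      constructor <;> linarith
  have hA1 : lam * Vm * (g a - g κ) ≤ lam * Vm * (g (max a κ) - g (min a κ)) :=
    mul_le_mul_of_nonneg_left haux.1 (mul_nonneg hlam.le hVm0)
  have hA2 : lam * Vm * (g κ - g a) ≤ lam * Vm * (g (max a κ) - g (min a κ)) :=
    mul_le_mul_of_nonneg_left haux.2 (mul_nonneg hlam.le hVm0)
  -- b-part claims
  have claim1 : (b - κ) - lam * (Vj * (g b - g κ)) ≤
      (max b κ - min b κ) - lam * (Vj * (g (max b κ) - g (min b κ))) := by
    rcases le_total κ b with h | h
    · rw [max_eq_left h, min_eq_right h]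
    · rw [max_eq_right h, min_eq_left h]
      have := keyB Vj hVj0 hVjb b hb κ hκ h
      linarith
  have claim2 : (κ - b) - lam * (Vj * (g κ - g b)) ≤
      (max b κ - min b κ) - lam * (Vj * (g (max b κ) - g (min b κ))) := by
    rcases le_total κ b with h | h
    · rw [max_eq_left h, min_eq_right h]
      have := keyB Vj hVj0 hVjb κ hκ b hb h
      linarith
    · rw [max_eq_right h, min_eq_left h]
  have claim0 : 0 ≤ (max b κ - min b κ) - lam * (Vj * (g (max b κ) - g (min b κ))) := by
    have := keyB Vj hVj0 hVjb (min b κ) hminb (max b κ) hmaxb (min_le_max)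
    linarith
  rcases lt_trichotomy (x - κ) 0 with hs | hs | hs
  · rw [Real.sign_of_neg hs, abs_of_neg hs]
    linarith [claim2, hA2]
  · rw [hs, Real.sign_zero, abs_zero]
    have hA0 : 0 ≤ lam * Vm * (g (max a κ) - g (min a κ)) :=
      mul_nonneg (mul_nonneg hlam.le hVm0)
        (by linarith [hg_mono (min a κ) hmina (max a κ) hmaxa min_le_max])
    have hz : x - κ = 0 := hs
    linarith [claim0, hA0]
  · rw [Real.sign_of_pos hs, abs_of_pos hs]
    linarith [claim1, hA1]
end

section
/- Pointwise estimate for the difference of convolution derivatives: with $V, U$ as above built from $\rho, \sigma : \mathbb{R} \to I$ with $\rho - \sigma \in L^1$, for a.e. $x$: $|U_x(x) - V_x(x)| \leq \|w_\eta'\|_\infty \|v'\|_\infty \|\rho-\sigma\|_{L^1} + w_\eta(0)\|v'\|_\infty (|\rho-\sigma|(x+\eta) + |\rho-\sigma|(x))$. -/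
open MeasureTheory

open Set Metric intervalIntegral Filter

lemma integrableOn_of_bound {f : ℝ → ℝ} {s : Set ℝ} (hs : MeasurableSet s)
    (hvol : volume s < ⊤) (hm : AEStronglyMeasurable f (volume.restrict s))
    {C : ℝ} (hC : ∀ y ∈ s, |f y| ≤ C) : IntegrableOn f s := by
  refine Integrable.mono' (g := fun _ => C) (integrableOn_const hvol.ne) hm ?_
  filter_upwards [ae_restrict_mem hs] with y hy
  simpa [Real.norm_eq_abs] using hC y hy

lemma intervalIntegrable_of_bound {f : ℝ → ℝ} (hm : Measurable f)
    {C : ℝ} (hC : ∀ y, |f y| ≤ C) (a b : ℝ) : IntervalIntegrable f volume a b := by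
  constructor <;>
    exact integrableOn_of_bound measurableSet_Ioc measure_Ioc_lt_top
      hm.aestronglyMeasurable.restrict (fun y _ => hC y)

lemma ae_hasDerivAt_primitive (g : ℝ → ℝ) (hg : Measurable g) (C : ℝ)
    (hC : ∀ y, |g y| ≤ C) :
    ∀ᵐ x : ℝ, HasDerivAt (fun t => ∫ s in (0:ℝ)..t, g s) (g x) x := by
  have hint : ∀ p q : ℝ, IntervalIntegrable g volume p q :=
    fun p q => intervalIntegrable_of_bound hg hC p q
  have hloc : LocallyIntegrable g := by
    intro x
    exact ⟨Metric.closedBall x 1, Metric.closedBall_mem_nhds x one_pos,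
      integrableOn_of_bound measurableSet_closedBall measure_closedBall_lt_top
        hg.aestronglyMeasurable.restrict (fun y _ => hC y)⟩
  filter_upwards [IsUnifLocDoublingMeasure.ae_tendsto_average_norm_sub (μ := volume) hloc 1] with x hx
  rw [hasDerivAt_iff_tendsto]
  rw [← nhdsNE_sup_pure x, tendsto_sup]
  constructor
  · -- on 𝓝[≠] x, squeeze by the average
    have hδ : Tendsto (fun x' : ℝ => |x' - x| / 2) (nhdsWithin x {x}ᶜ) (nhdsWithin 0 (Set.Ioi 0)) := by
      rw [tendsto_nhdsWithin_iff]
      constructor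
      · have hcont : Continuous (fun x' : ℝ => |x' - x| / 2) := by fun_prop
        have := hcont.tendsto x
        simp only [sub_self, abs_zero, zero_div] at this
        exact this.mono_left nhdsWithin_le_nhds
      · filter_upwards [self_mem_nhdsWithin] with y hy
        have : y - x ≠ 0 := sub_ne_zero.2 hy
        have : 0 < |y - x| := abs_pos.2 this
        exact div_pos this two_pos
    have havg := hx (fun x' : ℝ => (x + x') / 2) (fun x' : ℝ => |x' - x| / 2) hδ
      (by
        filter_upwards with x'
        rw [Metric.mem_closedBall, Real.dist_eq]
        have : x - (x + x') / 2 = (x - x') / 2 := by ring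
        rw [this, abs_div, abs_sub_comm x x']
        simp [abs_of_nonneg, le_refl])
    refine squeeze_zero' ?_ ?_ havg
    · filter_upwards with x'
      positivity
    · filter_upwards [self_mem_nhdsWithin] with x' (hx' : x' ≠ x)
      -- key estimate
      have hsub : Set.uIoc x x' ⊆ Metric.closedBall ((x + x') / 2) (|x' - x| / 2) := by
        rw [Real.closedBall_eq_Icc]
        intro y hy
        rw [Set.mem_uIoc] at hy
        simp only [Set.mem_Icc]
        rcases hy with hy | hy <;> rcases abs_cases (x' - x) with ⟨he, h2⟩ | ⟨he, h2⟩ <;>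
          rw [he] <;> constructor <;> linarith [hy.1, hy.2]
      have hne : x' - x ≠ 0 := sub_ne_zero.2 hx'
      have hr : (0:ℝ) < |x' - x| := abs_pos.2 hne
      have hdiff : (∫ s in (0:ℝ)..x', g s) - ∫ s in (0:ℝ)..x, g s = ∫ s in x..x', g s :=
        integral_interval_sub_left (hint 0 x') (hint 0 x)
      have hconst : (x' - x) • g x = ∫ s in x..x', g x := by
        rw [intervalIntegral.integral_const]
      have hineq : ‖(∫ s in (0:ℝ)..x', g s) - (∫ s in (0:ℝ)..x, g s) - (x' - x) • g x‖
          ≤ ∫ y in Set.uIoc x x', ‖g y - g x‖ := by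
        rw [hdiff, hconst, ← intervalIntegral.integral_sub (hint x x') intervalIntegrable_const]
        exact intervalIntegral.norm_integral_le_integral_norm_uIoc
      have hIcb : IntegrableOn (fun y => ‖g y - g x‖)
          (Metric.closedBall ((x + x') / 2) (|x' - x| / 2)) := by
        apply integrableOn_of_bound (C := C + C) measurableSet_closedBall
          measure_closedBall_lt_top
          ((hg.sub measurable_const).norm.aestronglyMeasurable.restrict)
        intro y _
        rw [abs_of_nonneg (norm_nonneg _)]
        calc ‖g y - g x‖ ≤ |g y| + |g x| := norm_sub_le _ _
          _ ≤ C + C := add_le_add (hC y) (hC x)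
      have hmono : ∫ y in Set.uIoc x x', ‖g y - g x‖
          ≤ ∫ y in Metric.closedBall ((x + x') / 2) (|x' - x| / 2), ‖g y - g x‖ :=
        setIntegral_mono_set hIcb (Filter.Eventually.of_forall fun y => norm_nonneg _)
          (HasSubset.Subset.eventuallyLE hsub)
      have hvol : (volume (Metric.closedBall ((x + x') / 2) (|x' - x| / 2))).toReal
          = |x' - x| := by
        rw [Real.volume_closedBall, ENNReal.toReal_ofReal (by positivity)]
        ring
      have havg_eq : ∫ y in Metric.closedBall ((x + x') / 2) (|x' - x| / 2), ‖g y - g x‖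
          = |x' - x| * ⨍ y in Metric.closedBall ((x + x') / 2) (|x' - x| / 2), ‖g y - g x‖ := by
        rw [setAverage_eq, smul_eq_mul, measureReal_def, hvol, ← mul_assoc, mul_inv_cancel₀ hr.ne', one_mul]
      show ‖x' - x‖⁻¹ * ‖(∫ s in (0:ℝ)..x', g s) - (∫ s in (0:ℝ)..x, g s) - (x' - x) • g x‖
          ≤ ⨍ y in Metric.closedBall ((x + x') / 2) (|x' - x| / 2), ‖g y - g x‖
      rw [Real.norm_eq_abs]
      have hstep := hineq.trans hmono
      calc |x' - x|⁻¹ * ‖(∫ s in (0:ℝ)..x', g s) - (∫ s in (0:ℝ)..x, g s) - (x' - x) • g x‖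
          ≤ |x' - x|⁻¹ * (|x' - x| *
            ⨍ y in Metric.closedBall ((x + x') / 2) (|x' - x| / 2), ‖g y - g x‖) := by
            rw [← havg_eq]
            exact mul_le_mul_of_nonneg_left hstep (by positivity)
        _ = ⨍ y in Metric.closedBall ((x + x') / 2) (|x' - x| / 2), ‖g y - g x‖ := by
            rw [← mul_assoc, inv_mul_cancel₀ hr.ne', one_mul]
  · -- pure x
    rw [tendsto_pure_left]
    intro s hs
    simpa using mem_of_mem_nhds hs


lemma setIntegral_swap_of_bound (F : ℝ → ℝ → ℝ) (hF : Measurable (Function.uncurry F))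
    (p q r u : ℝ) (C : ℝ) (hC : ∀ t ∈ Set.Ioc p q, ∀ s ∈ Set.Ioc r u, |F t s| ≤ C) :
    ∫ t in Set.Ioc p q, (∫ s in Set.Ioc r u, F t s) = ∫ s in Set.Ioc r u, (∫ t in Set.Ioc p q, F t s) := by
  haveI : Fact (volume (Set.Ioc p q) < ⊤) := ⟨measure_Ioc_lt_top⟩
  haveI : Fact (volume (Set.Ioc r u) < ⊤) := ⟨measure_Ioc_lt_top⟩
  apply MeasureTheory.integral_integral_swap
  refine Integrable.mono' (g := fun _ => C) (integrable_const C)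
    hF.aestronglyMeasurable ?_
  rw [Measure.prod_restrict]
  filter_upwards [ae_restrict_mem ((measurableSet_Ioc).prod (measurableSet_Ioc))] with z hz
  rw [Set.mem_prod] at hz
  simpa [Real.norm_eq_abs, Function.uncurry] using hC z.1 hz.1 z.2 hz.2

lemma intervalIntegral_swap_of_bound (F : ℝ → ℝ → ℝ) (hF : Measurable (Function.uncurry F))
    (a b c d : ℝ) (C : ℝ)
    (hC : ∀ t ∈ Set.uIoc a b, ∀ s ∈ Set.uIoc c d, |F t s| ≤ C) :
    ∫ t in a..b, (∫ s in c..d, F t s) = ∫ s in c..d, (∫ t in a..b, F t s) := by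
  have key := setIntegral_swap_of_bound F hF (a ⊓ b) (a ⊔ b) (c ⊓ d) (c ⊔ d) C hC
  simp only [intervalIntegral_eq_integral_uIoc, MeasureTheory.integral_smul, Set.uIoc]
  rw [key, smul_comm]

lemma ae_hasDerivAt_conv (g : ℝ → ℝ) (hg : Measurable g) (C : ℝ) (hC : ∀ y, |g y| ≤ C)
    (η : ℝ) (hη : 0 < η) (w : ℝ → ℝ) (hw : ContDiffOn ℝ 1 w (Set.Icc 0 η))
    (B : ℝ) (hB : ∀ s ∈ Set.Icc 0 η, |deriv w s| ≤ B) :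
    ∀ᵐ x : ℝ, HasDerivAt (fun x => ∫ y in x..(x + η), g y * w (y - x))
      (w η * g (x + η) - w 0 * g x - ∫ s in (0:ℝ)..η, deriv w s * g (x + s)) x := by
  have hC0 : 0 ≤ C := le_trans (abs_nonneg _) (hC 0)
  have hB0 : 0 ≤ B := le_trans (abs_nonneg _) (hB 0 ⟨le_rfl, hη.le⟩)
  have hwc : ContinuousOn w (Set.Icc 0 η) := hw.continuousOn
  obtain ⟨Mw, hMw⟩ := isCompact_Icc.exists_bound_of_continuousOn hwc
  have hWm : Measurable (deriv w) := measurable_deriv w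
  have hintg : ∀ p q : ℝ, IntervalIntegrable g volume p q :=
    fun p q => intervalIntegrable_of_bound hg hC p q
  have hwd : ∀ s ∈ Set.Ioo 0 η, HasDerivAt w (deriv w s) s := by
    intro s hs
    have h1 : DifferentiableWithinAt ℝ w (Set.Icc 0 η) s :=
      (hw.differentiableOn one_ne_zero) s (Set.Ioo_subset_Icc_self hs)
    exact (h1.differentiableAt (Icc_mem_nhds hs.1 hs.2)).hasDerivAt
  have hintW : ∀ p q : ℝ, p ∈ Set.Icc 0 η → q ∈ Set.Icc 0 η →
      IntervalIntegrable (deriv w) volume p q := by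
    intro p q hp hq
    constructor <;>
      refine integrableOn_of_bound (C := B) measurableSet_Ioc measure_Ioc_lt_top
        hWm.aestronglyMeasurable.restrict ?_
    · intro y hy; exact hB y ⟨le_trans hp.1 (le_of_lt hy.1), le_trans hy.2 hq.2⟩
    · intro y hy; exact hB y ⟨le_trans hq.1 (le_of_lt hy.1), le_trans hy.2 hp.2⟩
  have hftc : ∀ t ∈ Set.Icc 0 η, ∫ s in (0:ℝ)..t, deriv w s = w t - w 0 := by
    intro t ht
    refine intervalIntegral.integral_eq_sub_of_hasDeriv_right_of_le ht.1
      (hwc.mono (Set.Icc_subset_Icc le_rfl ht.2)) ?_ (hintW 0 t ⟨le_rfl, hη.le⟩ ht)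
    intro s hs
    exact (hwd s ⟨hs.1, lt_of_lt_of_le hs.2 ht.2⟩).hasDerivWithinAt
  set G : ℝ → ℝ := fun t => ∫ s in (0:ℝ)..t, g s with hGdef
  have hGsub : ∀ p q : ℝ, ∫ y in p..q, g y = G q - G p := fun p q =>
    (integral_interval_sub_left (hintg 0 q) (hintg 0 p)).symm
  have hGb : ∀ t, |G t| ≤ C * |t| := by
    intro t
    have := intervalIntegral.norm_integral_le_of_norm_le_const (a := 0) (b := t) (C := C)
      (f := g) (fun y _ => by simpa [Real.norm_eq_abs] using hC y)
    simpa [Real.norm_eq_abs] using this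
  have hGcont : Continuous G := intervalIntegral.continuous_primitive (fun p q => hintg p q) 0
  set q : ℝ → ℝ := fun t => ∫ s in (0:ℝ)..η, deriv w s * g (t + s) with hqdef
  have hqm : Measurable q := by
    have hm : Measurable (Function.uncurry fun t s => deriv w s * g (t + s)) :=
      (hWm.comp measurable_snd).mul (hg.comp (measurable_fst.add measurable_snd))
    have hsm := (hm.stronglyMeasurable).integral_prod_right' (ν := volume.restrict (Set.Ioc 0 η))
    have heq : q = fun t => ∫ s in Set.Ioc 0 η, deriv w s * g (t + s) := by
      funext t; rw [hqdef]; exact intervalIntegral.integral_of_le hη.le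
    rw [heq]; exact hsm.measurable
  have hqb : ∀ t, |q t| ≤ B * C * η := by
    intro t
    have h := intervalIntegral.norm_integral_le_of_norm_le_const (a := 0) (b := η)
      (C := B * C) (f := fun s => deriv w s * g (t + s)) ?_
    · rw [hqdef]
      simp only [Real.norm_eq_abs] at h
      calc |∫ s in (0:ℝ)..η, deriv w s * g (t + s)| ≤ B * C * |η - 0| := h
        _ = B * C * η := by rw [sub_zero, abs_of_pos hη]
    · intro s hs
      rw [Set.uIoc_of_le hη.le] at hs
      rw [Real.norm_eq_abs, abs_mul]
      exact mul_le_mul (hB s ⟨hs.1.le, hs.2⟩) (hC _) (abs_nonneg _) hB0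
  set Q : ℝ → ℝ := fun x => ∫ s in (0:ℝ)..η, deriv w s * G (x + s) with hQdef
  have hintQ : ∀ x : ℝ, IntervalIntegrable (fun s => deriv w s * G (x + s)) volume 0 η := by
    intro x
    have hm : Measurable fun s => deriv w s * G (x + s) :=
      hWm.mul (hGcont.measurable.comp (measurable_const.add measurable_id))
    constructor
    · refine integrableOn_of_bound (C := B * (C * (|x| + η))) measurableSet_Ioc
        measure_Ioc_lt_top hm.aestronglyMeasurable.restrict ?_
      intro s hs
      rw [abs_mul]
      refine mul_le_mul (hB s ⟨hs.1.le, hs.2⟩) ((hGb _).trans ?_) (abs_nonneg _) hB0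
      have h1 : |x + s| ≤ |x| + η := by
        calc |x + s| ≤ |x| + |s| := abs_add_le x s
          _ ≤ |x| + η := by rw [abs_of_pos hs.1]; linarith [hs.2]
      exact mul_le_mul_of_nonneg_left h1 hC0
    · simp [Set.Ioc_eq_empty (not_lt.2 hη.le)]
  -- Identity 1
  have hP : ∀ x : ℝ, ∫ y in x..(x + η), g y * w (y - x)
      = w η * G (x + η) - w 0 * G x - Q x := by
    intro x
    set F₁ : ℝ → ℝ → ℝ := fun z s => if z ≤ s then g (x + z) * deriv w s else 0 with hF₁def
    have hF₁m : Measurable (Function.uncurry F₁) := by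
      apply Measurable.ite (measurableSet_le measurable_fst measurable_snd)
      · exact (hg.comp (measurable_const.add measurable_fst)).mul (hWm.comp measurable_snd)
      · exact measurable_const
    have hbound : ∀ t ∈ Set.uIoc (0:ℝ) η, ∀ s ∈ Set.uIoc (0:ℝ) η, |F₁ t s| ≤ C * B := by
      intro t _ s hs
      rw [Set.uIoc_of_le hη.le] at hs
      by_cases h : t ≤ s
      · rw [hF₁def]; simp only [if_pos h]; rw [abs_mul]
        exact mul_le_mul (hC _) (hB s ⟨hs.1.le, hs.2⟩) (abs_nonneg _) hC0
      · rw [hF₁def]; simp only [if_neg h, abs_zero]; positivity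
    have hswap := intervalIntegral_swap_of_bound F₁ hF₁m 0 η 0 η (C * B) hbound
    have hinner : ∀ z ∈ Set.Ioc 0 η, (∫ s in (0:ℝ)..η, F₁ z s) = g (x + z) * (w η - w z) := by
      intro z hz
      have h1 : (fun s => F₁ z s) = Set.indicator (Set.Ici z) (fun s => g (x + z) * deriv w s) := by
        funext s
        rw [hF₁def, Set.indicator_apply]
        simp only [Set.mem_Ici]
      rw [intervalIntegral.integral_of_le hη.le, h1,
        MeasureTheory.setIntegral_indicator measurableSet_Ici]
      have h2 : Set.Ioc 0 η ∩ Set.Ici z = Set.Icc z η := by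
        ext y
        simp only [Set.mem_inter_iff, Set.mem_Ioc, Set.mem_Ici, Set.mem_Icc]
        constructor
        · rintro ⟨⟨_, h⟩, h'⟩; exact ⟨h', h⟩
        · rintro ⟨h', h⟩; exact ⟨⟨lt_of_lt_of_le hz.1 h', h⟩, h'⟩
      rw [h2, MeasureTheory.integral_Icc_eq_integral_Ioc, ← intervalIntegral.integral_of_le hz.2,
        intervalIntegral.integral_const_mul]
      congr 1
      have h3 := integral_interval_sub_left (hintW 0 η ⟨le_rfl, hη.le⟩ ⟨hη.le, le_rfl⟩)
        (hintW 0 z ⟨le_rfl, hη.le⟩ ⟨hz.1.le, hz.2⟩)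
      rw [← h3, hftc η ⟨hη.le, le_rfl⟩, hftc z ⟨hz.1.le, hz.2⟩]
      ring
    have hinner2 : ∀ s ∈ Set.Ioc 0 η,
        (∫ z in (0:ℝ)..η, F₁ z s) = deriv w s * (G (x + s) - G x) := by
      intro s hs
      have h1 : (fun z => F₁ z s) = Set.indicator (Set.Iic s) (fun z => g (x + z) * deriv w s) := by
        funext z
        rw [hF₁def, Set.indicator_apply]
        simp only [Set.mem_Iic]
      rw [intervalIntegral.integral_of_le hη.le, h1,
        MeasureTheory.setIntegral_indicator measurableSet_Iic]
      have h2 : Set.Ioc 0 η ∩ Set.Iic s = Set.Ioc 0 s := by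
        ext y
        simp only [Set.mem_inter_iff, Set.mem_Ioc, Set.mem_Iic]
        exact ⟨fun ⟨⟨h0, _⟩, h'⟩ => ⟨h0, h'⟩, fun ⟨h0, h'⟩ => ⟨⟨h0, h'.trans hs.2⟩, h'⟩⟩
      rw [h2, ← intervalIntegral.integral_of_le hs.1.le,
        intervalIntegral.integral_mul_const]
      rw [mul_comm]
      congr 1
      have h3 := intervalIntegral.integral_comp_add_left (a := 0) (b := s) g x
      rw [h3, add_zero, hGsub]
    -- integrability of pieces
    have hintwη : IntervalIntegrable (fun z => w η * g (x + z)) volume 0 η := by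
      have := ((hintg (x + 0) (x + η)).comp_add_left x).const_mul (w η)
      simpa using this
    have hintgw : IntervalIntegrable (fun z => g (x + z) * w z) volume 0 η := by
      constructor
      · refine integrableOn_of_bound (C := C * Mw) measurableSet_Ioc measure_Ioc_lt_top ?_ ?_
        · exact ((hg.comp (measurable_const.add measurable_id)).aestronglyMeasurable.restrict).mul
            ((hwc.mono Set.Ioc_subset_Icc_self).aestronglyMeasurable measurableSet_Ioc)
        · intro y hy
          rw [abs_mul]
          refine mul_le_mul (hC _) ?_ (abs_nonneg _) hC0
          have := hMw y ⟨hy.1.le, hy.2⟩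
          rwa [Real.norm_eq_abs] at this
      · simp [Set.Ioc_eq_empty (not_lt.2 hη.le)]
    -- compute LHS of hswap
    have hL : ∫ z in (0:ℝ)..η, (∫ s in (0:ℝ)..η, F₁ z s)
        = w η * (G (x + η) - G x) - ∫ y in x..(x + η), g y * w (y - x) := by
      rw [intervalIntegral.integral_of_le hη.le,
        MeasureTheory.setIntegral_congr_fun measurableSet_Ioc hinner,
        ← intervalIntegral.integral_of_le hη.le]
      have e1 : ∀ z : ℝ, g (x + z) * (w η - w z) = w η * g (x + z) - g (x + z) * w z :=
        fun z => by ring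
      simp_rw [e1]
      rw [intervalIntegral.integral_sub hintwη hintgw]
      congr 1
      · rw [intervalIntegral.integral_const_mul]
        congr 1
        have h3 := intervalIntegral.integral_comp_add_left (a := 0) (b := η) g x
        rw [h3, add_zero, hGsub]
      · have h4 := intervalIntegral.integral_comp_add_left (a := 0) (b := η)
          (fun y => g y * w (y - x)) x
        simp only [add_sub_cancel_left, add_zero] at h4
        exact h4
    have hR : ∫ s in (0:ℝ)..η, (∫ z in (0:ℝ)..η, F₁ z s) = Q x - (w η - w 0) * G x := by
      rw [intervalIntegral.integral_of_le hη.le,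
        MeasureTheory.setIntegral_congr_fun measurableSet_Ioc hinner2,
        ← intervalIntegral.integral_of_le hη.le]
      have e : ∀ s : ℝ, deriv w s * (G (x + s) - G x)
          = deriv w s * G (x + s) - deriv w s * G x := fun s => by ring
      simp_rw [e]
      rw [intervalIntegral.integral_sub (hintQ x)
        ((hintW 0 η ⟨le_rfl, hη.le⟩ ⟨hη.le, le_rfl⟩).mul_const (G x))]
      congr 1
      rw [intervalIntegral.integral_mul_const, hftc η ⟨hη.le, le_rfl⟩]
    rw [hL, hR] at hswap
    linarith
  -- Identity 2
  have hQsub : ∀ x : ℝ, Q x - Q 0 = ∫ t in (0:ℝ)..x, q t := by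
    intro x
    set F₂ : ℝ → ℝ → ℝ := fun s t => deriv w s * g (t + s) with hF₂def
    have hF₂m : Measurable (Function.uncurry F₂) :=
      (hWm.comp measurable_fst).mul (hg.comp (measurable_snd.add measurable_fst))
    have hbound : ∀ s ∈ Set.uIoc (0:ℝ) η, ∀ t ∈ Set.uIoc (0:ℝ) x, |F₂ s t| ≤ B * C := by
      intro s hs t _
      rw [Set.uIoc_of_le hη.le] at hs
      rw [hF₂def, abs_mul]
      exact mul_le_mul (hB s ⟨hs.1.le, hs.2⟩) (hC _) (abs_nonneg _) hB0
    have hswap := intervalIntegral_swap_of_bound F₂ hF₂m 0 η 0 x (B * C) hbound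
    have hL : ∫ s in (0:ℝ)..η, (∫ t in (0:ℝ)..x, F₂ s t) = Q x - Q 0 := by
      have e : ∀ s : ℝ, (∫ t in (0:ℝ)..x, F₂ s t) = deriv w s * G (x + s) - deriv w s * G (0 + s) := by
        intro s
        rw [hF₂def, intervalIntegral.integral_const_mul]
        have h3 := intervalIntegral.integral_comp_add_right (a := 0) (b := x) g s
        rw [h3, hGsub]
        ring
      simp_rw [e]
      rw [intervalIntegral.integral_sub (hintQ x) (by simpa using hintQ 0)]
    rw [hL] at hswap
    exact hswap
  have hQeq : Q = fun x => Q 0 + ∫ t in (0:ℝ)..x, q t := by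
    funext x
    have := hQsub x
    linarith
  have hQd0 := ae_hasDerivAt_primitive q hqm (B * C * η) hqb
  have h1 := ae_hasDerivAt_primitive g hg C hC
  have h2 : ∀ᵐ x : ℝ, HasDerivAt G (g (x + η)) (x + η) :=
    (measurePreserving_add_right volume η).quasiMeasurePreserving.ae h1
  filter_upwards [h1, h2, hQd0] with x hx1 hx2 hxQ
  have hGd : HasDerivAt (fun x => G (x + η)) (g (x + η)) x :=
    HasDerivAt.comp_add_const x η hx2
  have hQd' : HasDerivAt Q (q x) x := by
    rw [hQeq]
    exact hxQ.const_add (Q 0)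
  have hmain : HasDerivAt (fun x => w η * G (x + η) - w 0 * G x - Q x)
      (w η * g (x + η) - w 0 * g x - q x) x :=
    ((hGd.const_mul (w η)).sub (hx1.const_mul (w 0))).sub hQd'
  have hfun : (fun x => ∫ y in x..(x + η), g y * w (y - x))
      = fun x => w η * G (x + η) - w 0 * G x - Q x := funext hP
  rw [hfun]
  exact hmain

theorem convolution_derivative_difference_estimate
    (a b : ℝ) (hab : a ≤ b)
    (v v' : ℝ → ℝ)
    (hv_deriv : ∀ x ∈ Set.Icc a b, HasDerivAt v (v' x) x)
    (hv'_cont : ContinuousOn v' (Set.Icc a b))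
    (η : ℝ) (hη : 0 < η)
    (w : ℝ → ℝ)
    (hw_smooth : ContDiffOn ℝ 1 w (Set.Icc 0 η))
    (hw_nonneg : ∀ x ∈ Set.Icc (0:ℝ) η, 0 ≤ w x)
    (hw_mono : AntitoneOn w (Set.Icc 0 η))
    (ρ σ : ℝ → ℝ)
    (hρ_meas : Measurable ρ) (hσ_meas : Measurable σ)
    (hρ_mem : ∀ y, ρ y ∈ Set.Icc a b) (hσ_mem : ∀ y, σ y ∈ Set.Icc a b)
    (hρ_BV : BoundedVariationOn ρ Set.univ) (hσ_BV : BoundedVariationOn σ Set.univ)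
    (hL1 : Integrable (fun y => ρ y - σ y))
    (V U : ℝ → ℝ)
    (hV : ∀ x, V x = ∫ y in x..(x + η), v (ρ y) * w (y - x))
    (hU : ∀ x, U x = ∫ y in x..(x + η), v (σ y) * w (y - x)) :
    ∀ᵐ x : ℝ, |deriv U x - deriv V x| ≤
      supAbs (deriv w) (Set.Icc 0 η) * supAbs v' (Set.Icc a b) *
        (∫ y, |ρ y - σ y|)
      + w 0 * supAbs v' (Set.Icc a b) *
        (|ρ (x + η) - σ (x + η)| + |ρ x - σ x|) := by
  set M := supAbs v' (Set.Icc a b) with hMdef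
  set B := supAbs (deriv w) (Set.Icc 0 η) with hBdef
  have hv_cont : ContinuousOn v (Set.Icc a b) := fun t ht =>
    (hv_deriv t ht).continuousAt.continuousWithinAt
  -- clamp
  set cl : ℝ → ℝ := fun t => max a (min t b) with hcl
  have hcl_cont : Continuous cl := continuous_const.max (continuous_id.min continuous_const)
  have hcl_mem : ∀ t, cl t ∈ Set.Icc a b := fun t =>
    ⟨le_max_left _ _, max_le hab (min_le_right t b)⟩
  have hcl_fix : ∀ t ∈ Set.Icc a b, cl t = t := by
    intro t ht
    rw [hcl]
    simp only [min_eq_left ht.2, max_eq_right ht.1]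
  have hvcl : Continuous (fun t => v (cl t)) := hv_cont.comp_continuous hcl_cont hcl_mem
  have hvρ_meas : Measurable (fun y => v (ρ y)) := by
    have he : (fun y => v (ρ y)) = fun y => v (cl (ρ y)) := by
      funext y; rw [hcl_fix _ (hρ_mem y)]
    rw [he]; exact hvcl.measurable.comp hρ_meas
  have hvσ_meas : Measurable (fun y => v (σ y)) := by
    have he : (fun y => v (σ y)) = fun y => v (cl (σ y)) := by
      funext y; rw [hcl_fix _ (hσ_mem y)]
    rw [he]; exact hvcl.measurable.comp hσ_meas
  obtain ⟨Cv, hCv⟩ := isCompact_Icc.exists_bound_of_continuousOn hv_cont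
  have hCvρ : ∀ y, |v (ρ y)| ≤ Cv := fun y => by
    simpa [Real.norm_eq_abs] using hCv _ (hρ_mem y)
  have hCvσ : ∀ y, |v (σ y)| ≤ Cv := fun y => by
    simpa [Real.norm_eq_abs] using hCv _ (hσ_mem y)
  -- M properties
  have hMbdd : BddAbove ((fun t => |v' t|) '' Set.Icc a b) :=
    (isCompact_Icc.image_of_continuousOn (continuous_abs.comp_continuousOn hv'_cont)).bddAbove
  have hM : ∀ t ∈ Set.Icc a b, |v' t| ≤ M := fun t ht => le_csSup hMbdd ⟨t, ht, rfl⟩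
  have hM0 : 0 ≤ M := le_trans (abs_nonneg _) (hM a ⟨le_rfl, hab⟩)
  -- B properties
  have hdWcont : ContinuousOn (derivWithin w (Set.Icc 0 η)) (Set.Icc 0 η) :=
    hw_smooth.continuousOn_derivWithin (uniqueDiffOn_Icc hη) le_rfl
  obtain ⟨B₀, hB₀⟩ := isCompact_Icc.exists_bound_of_continuousOn hdWcont
  have hBbdd : BddAbove ((fun s => |deriv w s|) '' Set.Icc 0 η) := by
    refine ⟨max B₀ (max |deriv w 0| |deriv w η|), ?_⟩
    rintro r ⟨s, hs, rfl⟩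
    show |deriv w s| ≤ max B₀ (max |deriv w 0| |deriv w η|)
    rcases eq_or_lt_of_le hs.1 with h0 | h0
    · rw [← h0]; exact le_max_of_le_right (le_max_left _ _)
    rcases eq_or_lt_of_le hs.2 with h1 | h1
    · rw [h1]; exact le_max_of_le_right (le_max_right _ _)
    · have hnb : Set.Icc 0 η ∈ nhds s := Icc_mem_nhds h0 h1
      have he : derivWithin w (Set.Icc 0 η) s = deriv w s := derivWithin_of_mem_nhds hnb
      rw [← he]
      exact le_max_of_le_left (by simpa [Real.norm_eq_abs] using hB₀ s hs)
  have hB : ∀ s ∈ Set.Icc 0 η, |deriv w s| ≤ B := fun s hs => le_csSup hBbdd ⟨s, hs, rfl⟩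
  have hB0 : 0 ≤ B := le_trans (abs_nonneg _) (hB 0 ⟨le_rfl, hη.le⟩)
  -- MVT
  have hMVT : ∀ p ∈ Set.Icc a b, ∀ r ∈ Set.Icc a b, |v r - v p| ≤ M * |r - p| := by
    intro p hp r hr
    have := (convex_Icc a b).norm_image_sub_le_of_norm_hasDerivWithin_le
      (fun t ht => (hv_deriv t ht).hasDerivWithinAt)
      (fun t ht => by simpa [Real.norm_eq_abs] using hM t ht) hp hr
    simpa [Real.norm_eq_abs] using this
  have hΔ : ∀ y, |v (σ y) - v (ρ y)| ≤ M * |ρ y - σ y| := by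
    intro y
    have := hMVT _ (hρ_mem y) _ (hσ_mem y)
    rwa [abs_sub_comm (σ y) (ρ y)] at this
  -- apply the key lemma
  have hVd := ae_hasDerivAt_conv (fun y => v (ρ y)) hvρ_meas Cv hCvρ η hη w hw_smooth B hB
  have hUd := ae_hasDerivAt_conv (fun y => v (σ y)) hvσ_meas Cv hCvσ η hη w hw_smooth B hB
  have hδint : Integrable (fun y => |ρ y - σ y|) := hL1.abs
  have hw0 : 0 ≤ w 0 := hw_nonneg 0 ⟨le_rfl, hη.le⟩
  have hwη : 0 ≤ w η := hw_nonneg η ⟨hη.le, le_rfl⟩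
  have hwmono : w η ≤ w 0 := hw_mono ⟨le_rfl, hη.le⟩ ⟨hη.le, le_rfl⟩ hη.le
  filter_upwards [hVd, hUd] with x hVx hUx
  have hVfun : V = fun x => ∫ y in x..(x + η), v (ρ y) * w (y - x) := funext hV
  have hUfun : U = fun x => ∫ y in x..(x + η), v (σ y) * w (y - x) := funext hU
  have hdV : deriv V x = w η * v (ρ (x + η)) - w 0 * v (ρ x)
      - ∫ s in (0:ℝ)..η, deriv w s * v (ρ (x + s)) := by
    rw [hVfun]; exact hVx.deriv
  have hdU : deriv U x = w η * v (σ (x + η)) - w 0 * v (σ x)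
      - ∫ s in (0:ℝ)..η, deriv w s * v (σ (x + s)) := by
    rw [hUfun]; exact hUx.deriv
  rw [hdU, hdV]
  -- integrability facts
  have hwm : Measurable (deriv w) := measurable_deriv w
  have hintρ : IntervalIntegrable (fun s => deriv w s * v (ρ (x + s))) volume 0 η := by
    constructor
    · refine integrableOn_of_bound (C := B * Cv) measurableSet_Ioc measure_Ioc_lt_top
        ((hwm.mul (hvρ_meas.comp (measurable_const.add measurable_id))).aestronglyMeasurable.restrict) ?_
      intro s hs
      rw [abs_mul]
      exact mul_le_mul (hB s ⟨hs.1.le, hs.2⟩) (hCvρ _) (abs_nonneg _) hB0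
    · simp [Set.Ioc_eq_empty (not_lt.2 hη.le)]
  have hintσ : IntervalIntegrable (fun s => deriv w s * v (σ (x + s))) volume 0 η := by
    constructor
    · refine integrableOn_of_bound (C := B * Cv) measurableSet_Ioc measure_Ioc_lt_top
        ((hwm.mul (hvσ_meas.comp (measurable_const.add measurable_id))).aestronglyMeasurable.restrict) ?_
      intro s hs
      rw [abs_mul]
      exact mul_le_mul (hB s ⟨hs.1.le, hs.2⟩) (hCvσ _) (abs_nonneg _) hB0
    · simp [Set.Ioc_eq_empty (not_lt.2 hη.le)]
  have hfe : (fun s => deriv w s * (v (σ (x + s)) - v (ρ (x + s))))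
      = fun s => deriv w s * v (σ (x + s)) - deriv w s * v (ρ (x + s)) := by
    funext s; ring
  have hintd : IntervalIntegrable
      (fun s => deriv w s * (v (σ (x + s)) - v (ρ (x + s)))) volume 0 η := by
    rw [hfe]; exact hintσ.sub hintρ
  have hIdiff : (∫ s in (0:ℝ)..η, deriv w s * v (σ (x + s)))
      - ∫ s in (0:ℝ)..η, deriv w s * v (ρ (x + s))
      = ∫ s in (0:ℝ)..η, deriv w s * (v (σ (x + s)) - v (ρ (x + s))) := by
    rw [hfe, intervalIntegral.integral_sub hintσ hintρ]
  have hδtrans : Integrable (fun s => |ρ (x + s) - σ (x + s)|) :=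
    hδint.comp_add_left x
  have hIbound : |∫ s in (0:ℝ)..η, deriv w s * (v (σ (x + s)) - v (ρ (x + s)))|
      ≤ B * M * ∫ y, |ρ y - σ y| := by
    have htri := intervalIntegral.abs_integral_le_integral_abs (μ := volume) hη.le
      (f := fun s => deriv w s * (v (σ (x + s)) - v (ρ (x + s))))
    have hmono : (∫ s in (0:ℝ)..η, |deriv w s * (v (σ (x + s)) - v (ρ (x + s)))|)
        ≤ ∫ s in (0:ℝ)..η, B * M * |ρ (x + s) - σ (x + s)| := by
      apply intervalIntegral.integral_mono_on hη.le hintd.abs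
        ((hδtrans.const_mul (B * M)).intervalIntegrable)
      intro s hs
      rw [abs_mul]
      calc |deriv w s| * |v (σ (x + s)) - v (ρ (x + s))|
          ≤ B * (M * |ρ (x + s) - σ (x + s)|) :=
            mul_le_mul (hB s hs) (hΔ _) (abs_nonneg _) hB0
        _ = B * M * |ρ (x + s) - σ (x + s)| := by ring
    have heval : (∫ s in (0:ℝ)..η, B * M * |ρ (x + s) - σ (x + s)|)
        = B * M * ∫ s in (0:ℝ)..η, |ρ (x + s) - σ (x + s)| :=
      intervalIntegral.integral_const_mul _ _
    have htrans2 : (∫ s in (0:ℝ)..η, |ρ (x + s) - σ (x + s)|)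
        = ∫ y in x..(x + η), |ρ y - σ y| := by
      have h3 := intervalIntegral.integral_comp_add_left (a := (0:ℝ)) (b := η)
        (fun y => |ρ y - σ y|) x
      simpa using h3
    have hle : (∫ y in x..(x + η), |ρ y - σ y|) ≤ ∫ y, |ρ y - σ y| := by
      rw [intervalIntegral.integral_of_le (by linarith : x ≤ x + η)]
      exact setIntegral_le_integral hδint (Filter.Eventually.of_forall fun y => abs_nonneg _)
    calc |∫ s in (0:ℝ)..η, deriv w s * (v (σ (x + s)) - v (ρ (x + s)))|
        ≤ ∫ s in (0:ℝ)..η, |deriv w s * (v (σ (x + s)) - v (ρ (x + s)))| := htri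
      _ ≤ ∫ s in (0:ℝ)..η, B * M * |ρ (x + s) - σ (x + s)| := hmono
      _ = B * M * ∫ y in x..(x + η), |ρ y - σ y| := by rw [heval, htrans2]
      _ ≤ B * M * ∫ y, |ρ y - σ y| := by
          exact mul_le_mul_of_nonneg_left hle (by positivity)
  -- final estimate
  have e : w η * v (σ (x + η)) - w 0 * v (σ x)
      - (∫ s in (0:ℝ)..η, deriv w s * v (σ (x + s)))
      - (w η * v (ρ (x + η)) - w 0 * v (ρ x)
      - ∫ s in (0:ℝ)..η, deriv w s * v (ρ (x + s)))
      = w η * (v (σ (x + η)) - v (ρ (x + η))) - w 0 * (v (σ x) - v (ρ x))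
      - ((∫ s in (0:ℝ)..η, deriv w s * v (σ (x + s)))
        - ∫ s in (0:ℝ)..η, deriv w s * v (ρ (x + s))) := by ring
  rw [e, hIdiff]
  have t1 : |w η * (v (σ (x + η)) - v (ρ (x + η)))| ≤ w 0 * (M * |ρ (x + η) - σ (x + η)|) := by
    rw [abs_mul, abs_of_nonneg hwη]
    exact mul_le_mul hwmono (hΔ _) (abs_nonneg _) hw0
  have t2 : |w 0 * (v (σ x) - v (ρ x))| ≤ w 0 * (M * |ρ x - σ x|) := by
    rw [abs_mul, abs_of_nonneg hw0]
    exact mul_le_mul_of_nonneg_left (hΔ _) hw0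
  have tri : |w η * (v (σ (x + η)) - v (ρ (x + η))) - w 0 * (v (σ x) - v (ρ x))
      - ∫ s in (0:ℝ)..η, deriv w s * (v (σ (x + s)) - v (ρ (x + s)))|
      ≤ |w η * (v (σ (x + η)) - v (ρ (x + η)))| + |w 0 * (v (σ x) - v (ρ x))|
        + |∫ s in (0:ℝ)..η, deriv w s * (v (σ (x + s)) - v (ρ (x + s)))| := by
    have h1 := abs_sub (w η * (v (σ (x + η)) - v (ρ (x + η))) - w 0 * (v (σ x) - v (ρ x)))
      (∫ s in (0:ℝ)..η, deriv w s * (v (σ (x + s)) - v (ρ (x + s))))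
    have h2 := abs_sub (w η * (v (σ (x + η)) - v (ρ (x + η)))) (w 0 * (v (σ x) - v (ρ x)))
    linarith
  refine tri.trans ?_
  have := hIbound
  nlinarith [t1, t2, hIbound]
end
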